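/- Let ν* = W₋₁((η₀-1)e^{η₀-1})/(η₀-1) - 1, where W₋₁ is the lower branch of the Lambert W function and 0 < η₀ < 1. Then ν* is the unique positive solution of the equation 1 - e^{-η₀ν} = 1 - e^{-ν} - ν e^{-ν}, i.e. e^{-η₀ν} = (1+ν)e^{-ν}. -/

import Mathlib

lemma lambert_strictAntiOn : StrictAntiOn (fun x : ℝ => x * Real.exp x) (Set.Iic (-1)) := by
  apply strictAntiOn_of_deriv_neg (convex_Iic _)
  · exact (continuous_id.mul Real.continuous_exp).continuousOn
  · intro x hx
    rw [interior_Iic] at hx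
    have hd : HasDerivAt (fun x : ℝ => x * Real.exp x) (1 * Real.exp x + x * Real.exp x) x :=
      (hasDerivAt_id x).mul (Real.hasDerivAt_exp x)
    rw [hd.deriv]
    have h1 := Real.exp_pos x
    have h2 := Set.mem_Iio.mp hx
    nlinarith

/-- Let 0 < η₀ < 1 and let w = W₋₁((η₀-1)e^{η₀-1}) be the lower Lambert-W branch value,
characterized by w e^w = (η₀-1)e^{η₀-1} and w < -1. Then ν* = w/(η₀-1) - 1 is the unique
positive solution of e^{-η₀ν} = (1+ν)e^{-ν}. -/
theorem max_intensity_lambert (η₀ w : ℝ) (hη₀0 : 0 < η₀) (hη₀1 : η₀ < 1)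
    (hw : w * Real.exp w = (η₀ - 1) * Real.exp (η₀ - 1)) (hw1 : w < -1) :
    0 < w / (η₀ - 1) - 1 ∧
      Real.exp (-(η₀ * (w / (η₀ - 1) - 1)))
        = (1 + (w / (η₀ - 1) - 1)) * Real.exp (-(w / (η₀ - 1) - 1)) ∧
      ∀ ν : ℝ, 0 < ν → Real.exp (-(η₀ * ν)) = (1 + ν) * Real.exp (-ν) →
        ν = w / (η₀ - 1) - 1 := by
  have ha : η₀ - 1 < 0 := by linarith
  have hne : (η₀ - 1) ≠ 0 := ne_of_lt ha
  set ν := w / (η₀ - 1) - 1 with hνdef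
  have h1ν : 1 + ν = w / (η₀ - 1) := by rw [hνdef]; ring
  have hweq : w = (η₀ - 1) * (1 + ν) := by
    rw [h1ν]; field_simp
  have hpos : 0 < ν := by
    have hgt : 1 < w / (η₀ - 1) := by
      rw [lt_div_iff_of_neg ha]; linarith
    linarith [h1ν ▸ hgt]
  -- key identity: (1+ν) * exp((η₀-1)ν) = 1
  have hkey : (1 + ν) * Real.exp ((η₀ - 1) * ν) = 1 := by
    have hexp : Real.exp ((η₀ - 1) * (1 + ν))
        = Real.exp ((η₀ - 1) * ν) * Real.exp (η₀ - 1) := by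
      rw [← Real.exp_add]; ring_nf
    have h2 : ((η₀ - 1) * Real.exp (η₀ - 1)) * ((1 + ν) * Real.exp ((η₀ - 1) * ν))
        = ((η₀ - 1) * Real.exp (η₀ - 1)) * 1 := by
      rw [mul_one]
      calc ((η₀ - 1) * Real.exp (η₀ - 1)) * ((1 + ν) * Real.exp ((η₀ - 1) * ν))
          = ((η₀ - 1) * (1 + ν)) * (Real.exp ((η₀ - 1) * ν) * Real.exp (η₀ - 1)) := by ring
        _ = w * Real.exp w := by rw [← hexp, ← hweq]
        _ = (η₀ - 1) * Real.exp (η₀ - 1) := hw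
    exact mul_left_cancel₀ (mul_ne_zero hne (Real.exp_ne_zero _)) h2
  have h1ν' : 1 + ν = Real.exp (-((η₀ - 1) * ν)) := by
    rw [Real.exp_neg]
    exact eq_inv_of_mul_eq_one_left hkey
  have hmain : Real.exp (-(η₀ * ν)) = (1 + ν) * Real.exp (-ν) := by
    rw [h1ν', ← Real.exp_add]
    congr 1; ring
  refine ⟨hpos, hmain, ?_⟩
  intro ν' hν' heq
  -- derive 1 + ν' = exp ((1-η₀) ν')
  have h1 : 1 + ν' = Real.exp ((1 - η₀) * ν') := by
    have hm : (1 + ν') * (Real.exp (-ν') * Real.exp ν') = Real.exp (-(η₀ * ν')) * Real.exp ν' := by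
      rw [← mul_assoc, ← heq]
    rw [← Real.exp_add, ← Real.exp_add, neg_add_cancel, Real.exp_zero, mul_one] at hm
    rw [hm]; congr 1; ring
  set t : ℝ := (1 - η₀) * ν' with htdef
  have ht : 0 < t := by
    have : 0 < 1 - η₀ := by linarith
    exact mul_pos this hν'
  have hexpt : 1 < Real.exp t := by
    calc (1:ℝ) < 1 + ν' := by linarith
    _ = Real.exp t := h1
  -- t e^t > e^t - 1
  have hlt : Real.exp t - 1 < t * Real.exp t := by
    have h2 : -t + 1 < Real.exp (-t) := Real.add_one_lt_exp (by intro h; simp at h; linarith : -t ≠ 0)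
    have h3 : Real.exp (-t) * Real.exp t = 1 := by
      rw [← Real.exp_add, neg_add_cancel, Real.exp_zero]
    nlinarith [Real.exp_pos t]
  -- hence (1-η₀) * exp t > 1
  have hgt1 : 1 < (1 - η₀) * Real.exp t := by
    have hνeq : ν' = Real.exp t - 1 := by linarith
    have : ν' * ((1 - η₀) * Real.exp t) = t * Real.exp t := by rw [htdef]; ring
    nlinarith
  set w' : ℝ := (η₀ - 1) * (1 + ν') with hw'def
  have hw'1 : w' < -1 := by
    have : w' = -((1 - η₀) * Real.exp t) := by rw [hw'def, h1]; ring
    rw [this]; linarith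
  have hw'eq : w' * Real.exp w' = (η₀ - 1) * Real.exp (η₀ - 1) := by
    have hexp : Real.exp w' = Real.exp ((η₀ - 1) * ν') * Real.exp (η₀ - 1) := by
      rw [← Real.exp_add, hw'def]; ring_nf
    have hone : (1 + ν') * Real.exp ((η₀ - 1) * ν') = 1 := by
      rw [h1, ← Real.exp_add]
      have : (1 - η₀) * ν' + (η₀ - 1) * ν' = 0 := by ring
      rw [this, Real.exp_zero]
    calc w' * Real.exp w'
        = ((η₀ - 1) * Real.exp (η₀ - 1)) * ((1 + ν') * Real.exp ((η₀ - 1) * ν')) := by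
          rw [hexp, hw'def]; ring
      _ = (η₀ - 1) * Real.exp (η₀ - 1) := by rw [hone, mul_one]
  have hww' : w = w' := by
    apply lambert_strictAntiOn.injOn (Set.mem_Iic.mpr (le_of_lt hw1))
      (Set.mem_Iic.mpr (le_of_lt hw'1))
    simp only []
    rw [hw, hw'eq]
  have : w = (η₀ - 1) * (1 + ν') := by rw [hww', hw'def]
  rw [hνdef, this]
  field_simp
  ring
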